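/- For every θ ∈ (0, π/2), the equation 9 = 2·(cot θ)² + 7·(cot 2θ)² holds if and only if (cot θ)² = (25 + 2√130)/15 or (cot θ)² = (25 − 2√130)/15. -/

import Mathlib

open Real

theorem stmt_17 :
    ∀ θ ∈ Set.Ioo 0 (π / 2),
      (9 : ℝ) = 2 * (Real.cot θ) ^ 2 + 7 * (Real.cot (2 * θ)) ^ 2 ↔
        (Real.cot θ) ^ 2 = (25 + 2 * Real.sqrt 130) / 15 ∨
          (Real.cot θ) ^ 2 = (25 - 2 * Real.sqrt 130) / 15 := by
  intro θ hθ
  obtain ⟨h1, h2⟩ := hθ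
  have hs : 0 < Real.sin θ := Real.sin_pos_of_pos_of_lt_pi h1 (by linarith [Real.pi_pos])
  have hc : 0 < Real.cos θ := Real.cos_pos_of_mem_Ioo ⟨by linarith [Real.pi_pos], h2⟩
  have ht : Real.cot θ ≠ 0 := by
    rw [Real.cot_eq_cos_div_sin]
    positivity
  have h2t : Real.cot (2 * θ) = (Real.cot θ ^ 2 - 1) / (2 * Real.cot θ) := by
    rw [Real.cot_eq_cos_div_sin, Real.cot_eq_cos_div_sin, Real.sin_two_mul,
      Real.cos_two_mul]
    field_simp
    linear_combination Real.sin_sq_add_cos_sq θ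
  have hsqrt : Real.sqrt 130 ^ 2 = 130 := Real.sq_sqrt (by norm_num)
  set x := Real.cot θ ^ 2 with hx
  have key : ((9 : ℝ) = 2 * x + 7 * (Real.cot (2 * θ)) ^ 2) ↔
      15 * x ^ 2 - 50 * x + 7 = 0 := by
    rw [h2t]
    constructor
    · intro h
      field_simp at h
      nlinarith [h]
    · intro h
      field_simp
      nlinarith [h]
  rw [key]
  have factor : 15 * x ^ 2 - 50 * x + 7 =
      15 * (x - (25 + 2 * Real.sqrt 130) / 15) * (x - (25 - 2 * Real.sqrt 130) / 15) := by
    linear_combination (4 / 15) * hsqrt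
  rw [factor, mul_assoc, mul_eq_zero, mul_eq_zero, sub_eq_zero, sub_eq_zero]
  norm_num
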